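/- Gilbert–Varshamov bound for permutation codes: for all n ≥ 1 and 1 ≤ d ≤ n, there exists a permutation code PA(n,d) of size at least n! / (Σ_{k=0}^{d−1} C(n,k)·D_k); i.e., M(n,d) · Σ_{k=0}^{d−1} C(n,k)·D_k ≥ n!. -/

import Mathlib

open Finset Equiv

private lemma gv_fiber_card {n : ℕ} (S : Finset (Fin n)) :
    (Finset.univ.filter fun τ : Equiv.Perm (Fin n) => τ.support = S).card
      = numDerangements S.card := by
  classical
  rw [← Fintype.card_subtype, ← Fintype.card_coe S,
    ← card_derangements_eq_numDerangements]
  refine Fintype.card_congr ?_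
  have hiff : ∀ τ : {x : Equiv.Perm (Fin n) // x.support = S}, ∀ x : Fin n,
      τ.1 x ∈ S ↔ x ∈ S := fun τ x => by
    simp only [← τ.2, Equiv.Perm.apply_mem_support]
  refine
    { toFun := fun τ => ⟨τ.1.subtypePerm (hiff τ), fun x => ?_⟩
      invFun := fun f => ⟨Equiv.Perm.ofSubtype f.1, ?_⟩
      left_inv := fun τ => Subtype.ext (Equiv.Perm.ofSubtype_subtypePerm (hiff τ)
        (fun x hx => τ.2 ▸ Equiv.Perm.mem_support.mpr hx))
      right_inv := fun f => Subtype.ext (Equiv.Perm.subtypePerm_ofSubtype f.1) }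
  · intro h
    have hx : (x : Fin n) ∈ τ.1.support := by rw [τ.2]; exact x.2
    exact (Equiv.Perm.mem_support.mp hx) (congrArg Subtype.val h)
  · ext i
    rw [Equiv.Perm.mem_support]
    by_cases hi : i ∈ S
    · rw [Equiv.Perm.ofSubtype_apply_of_mem f.1 hi]
      simp only [hi, iff_true]
      intro h
      exact f.2 ⟨i, hi⟩ (Subtype.ext h)
    · rw [Equiv.Perm.ofSubtype_apply_of_not_mem f.1 hi]
      simp [hi]

private lemma gv_card_support_card_eq {n k : ℕ} :
    (Finset.univ.filter fun τ : Equiv.Perm (Fin n) => τ.support.card = k).card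
      = Nat.choose n k * numDerangements k := by
  classical
  rw [Finset.card_eq_sum_card_fiberwise (f := fun τ : Equiv.Perm (Fin n) => τ.support)
    (t := Finset.powersetCard k Finset.univ)
    (fun τ hτ => by simpa [Finset.mem_powersetCard_univ] using (Finset.mem_filter.mp hτ).2)]
  have h1 : ∀ S ∈ Finset.powersetCard k (Finset.univ : Finset (Fin n)),
      ((Finset.univ.filter fun τ : Equiv.Perm (Fin n) => τ.support.card = k).filter
        fun τ => τ.support = S).card = numDerangements k := by
    intro S hS
    have hSc : S.card = k := Finset.mem_powersetCard_univ.mp hS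
    rw [Finset.filter_filter]
    have heq : Finset.univ.filter
          (fun τ : Equiv.Perm (Fin n) => τ.support.card = k ∧ τ.support = S)
        = Finset.univ.filter fun τ : Equiv.Perm (Fin n) => τ.support = S := by
      refine Finset.filter_congr fun τ _ => ?_
      constructor
      · exact fun h => h.2
      · exact fun h => ⟨h ▸ hSc, h⟩
    rw [heq, gv_fiber_card, hSc]
  rw [Finset.sum_congr rfl h1, Finset.sum_const, Finset.card_powersetCard,
    Finset.card_univ, Fintype.card_fin, smul_eq_mul]

private lemma gv_ball_card {n : ℕ} (e : ℕ) (π : Equiv.Perm (Fin n)) :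
    (Finset.univ.filter fun τ : Equiv.Perm (Fin n) => hammingDist ⇑π ⇑τ ≤ e).card
      = ∑ k ∈ Finset.range (e + 1), Nat.choose n k * numDerangements k := by
  classical
  have key : ∀ τ : Equiv.Perm (Fin n), hammingDist ⇑π ⇑τ = (π⁻¹ * τ).support.card := by
    intro τ
    unfold hammingDist
    rw [Equiv.Perm.support]
    congr 1
    ext i
    simp only [Finset.mem_filter, Finset.mem_univ, true_and, ne_eq]
    rw [Equiv.Perm.mul_apply, not_iff_not]
    constructor
    · intro h; rw [← h]; simp
    · intro h; conv_lhs => rw [← h]; simp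
  have hbij : (Finset.univ.filter fun τ : Equiv.Perm (Fin n) => hammingDist ⇑π ⇑τ ≤ e).card
      = (Finset.univ.filter fun τ : Equiv.Perm (Fin n) => τ.support.card ≤ e).card := by
    refine Finset.card_nbij' (fun τ => π⁻¹ * τ) (fun τ => π * τ) ?_ ?_ ?_ ?_
    · intro τ hτ
      simp only [Finset.mem_coe, Finset.mem_filter, Finset.mem_univ, true_and] at hτ ⊢
      rw [← key]; exact hτ
    · intro τ hτ
      simp only [Finset.mem_coe, Finset.mem_filter, Finset.mem_univ, true_and] at hτ ⊢
      rw [key]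
      simpa using hτ
    · intro τ _; simp [mul_assoc, ← mul_assoc]
    · intro τ _; simp [← mul_assoc]
  rw [hbij]
  rw [Finset.card_eq_sum_card_fiberwise
    (f := fun τ : Equiv.Perm (Fin n) => τ.support.card) (t := Finset.range (e + 1))
    (fun τ hτ => by
      simpa [Finset.mem_range, Nat.lt_succ_iff] using (Finset.mem_filter.mp hτ).2)]
  refine Finset.sum_congr rfl fun k hk => ?_
  rw [Finset.mem_range, Nat.lt_succ_iff] at hk
  rw [Finset.filter_filter, ← gv_card_support_card_eq (n := n) (k := k)]
  congr 1
  apply Finset.filter_congr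
  intro τ _
  constructor
  · exact fun h => h.2
  · exact fun h => ⟨h ▸ hk, h⟩

theorem gilbert_varshamov_perm (n d : ℕ) (hd : 1 ≤ d) (hdn : d ≤ n) :
    ∃ P : Finset (Equiv.Perm (Fin n)),
      (∀ π ∈ P, ∀ σ ∈ P, π ≠ σ → d ≤ hammingDist ⇑π ⇑σ) ∧
      Nat.factorial n ≤ P.card * ∑ k ∈ Finset.range d, Nat.choose n k * numDerangements k := by
  classical
  set good : Finset (Equiv.Perm (Fin n)) → Prop :=
    fun P => ∀ π ∈ P, ∀ σ ∈ P, π ≠ σ → d ≤ hammingDist ⇑π ⇑σ with hgood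
  obtain ⟨P, hPmem, hPmax⟩ := Finset.exists_max_image
    ((Finset.univ : Finset (Finset (Equiv.Perm (Fin n)))).filter good) Finset.card
    ⟨∅, by simp [hgood]⟩
  have hP : good P := (Finset.mem_filter.mp hPmem).2
  refine ⟨P, hP, ?_⟩
  -- covering property
  have hcover : ∀ τ : Equiv.Perm (Fin n), ∃ π ∈ P, hammingDist ⇑π ⇑τ ≤ d - 1 := by
    intro τ
    by_contra hc
    push_neg at hc
    have hτP : τ ∉ P := fun h => by
      have := hc τ h
      rw [hammingDist_self] at this
      omega
    have hgood' : good (insert τ P) := by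
      intro π hπ σ hσ hne
      rcases Finset.mem_insert.mp hπ with h1 | h1
      · rcases Finset.mem_insert.mp hσ with h2 | h2
        · exact absurd (h1.trans h2.symm) hne
        · subst h1
          have := hc σ h2
          rw [hammingDist_comm]
          omega
      · rcases Finset.mem_insert.mp hσ with h2 | h2
        · subst h2
          have := hc π h1
          omega
        · exact hP π h1 σ h2 hne
    have hmem' : insert τ P ∈
        (Finset.univ : Finset (Finset (Equiv.Perm (Fin n)))).filter good :=
      Finset.mem_filter.mpr ⟨Finset.mem_univ _, hgood'⟩
    have := hPmax _ hmem'
    rw [Finset.card_insert_of_notMem hτP] at this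
    omega
  -- count
  have hsub : (Finset.univ : Finset (Equiv.Perm (Fin n))) ⊆
      P.biUnion fun π => Finset.univ.filter fun τ => hammingDist ⇑π ⇑τ ≤ d - 1 := by
    intro τ _
    obtain ⟨π, hπ, hdist⟩ := hcover τ
    exact Finset.mem_biUnion.mpr ⟨π, hπ, Finset.mem_filter.mpr ⟨Finset.mem_univ _, hdist⟩⟩
  have h1 : Nat.factorial n ≤
      (P.biUnion fun π => Finset.univ.filter
        fun τ : Equiv.Perm (Fin n) => hammingDist ⇑π ⇑τ ≤ d - 1).card := by
    have := Finset.card_le_card hsub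
    rwa [Finset.card_univ, Fintype.card_perm, Fintype.card_fin] at this
  calc Nat.factorial n
      ≤ (P.biUnion fun π => Finset.univ.filter
          fun τ : Equiv.Perm (Fin n) => hammingDist ⇑π ⇑τ ≤ d - 1).card := h1
    _ ≤ ∑ π ∈ P, (Finset.univ.filter
          fun τ : Equiv.Perm (Fin n) => hammingDist ⇑π ⇑τ ≤ d - 1).card :=
        Finset.card_biUnion_le
    _ = ∑ π ∈ P, ∑ k ∈ Finset.range d, Nat.choose n k * numDerangements k := by
        refine Finset.sum_congr rfl fun π _ => ?_
        rw [gv_ball_card (d - 1) π, Nat.sub_add_cancel hd]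
    _ = P.card * ∑ k ∈ Finset.range d, Nat.choose n k * numDerangements k := by
        rw [Finset.sum_const, smul_eq_mul]
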